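/- Let S be a control semigroup that is mono-bounded at ∞ and let f be a bound function of S at ∞. Then there exists a metric space X such that asdim_{L({f} ∪ S)} X = 0 and asdim_S X > 0. -/

import Mathlib

open Filter Set Metric Topology
open scoped NNReal ENNReal

/-- A large-scale (asymptotic) dim-control function: continuous, increasing,
eventually at least the identity, tending to infinity. -/
def IsLSControl (f : ℝ≥0 → ℝ≥0) : Prop :=
  Continuous f ∧ Monotone f ∧ (∀ᶠ x in atTop, x ≤ f x) ∧ Tendsto f atTop atTop

/-- Asymptotically linear: coincides with a linear function on a neighborhood of infinity. -/
def IsAsympLinear (f : ℝ≥0 → ℝ≥0) : Prop :=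
  ∃ a b : ℝ≥0, ∀ᶠ x in atTop, f x = a * x + b

/-- A (large-scale) control semigroup. -/
def IsControlSemigroup (S : Set (ℝ≥0 → ℝ≥0)) : Prop :=
  (∀ f ∈ S, IsLSControl f) ∧
  (∀ f, IsLSControl f → IsAsympLinear f → f ∈ S) ∧
  (∀ f ∈ S, ∀ g ∈ S, f ∘ g ∈ S)

/-- A family of subsets is `s`-disjoint if distinct members are at distance `> s`. -/
def SDisjoint {X : Type*} [MetricSpace X] (s : ℝ≥0) (𝒰 : Set (Set X)) : Prop :=
  ∀ U ∈ 𝒰, ∀ V ∈ 𝒰, U ≠ V → ∀ x ∈ U, ∀ y ∈ V, (s : ℝ) < dist x y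

/-- A family of subsets is `D`-bounded if each member has diameter at most `D`. -/
def BoundedBy {X : Type*} [MetricSpace X] (D : ℝ≥0) (𝒰 : Set (Set X)) : Prop :=
  ∀ U ∈ 𝒰, EMetric.diam U ≤ (D : ℝ≥0∞)

/-- `asdim_S X ≤ n`. -/
def ASDimLE (S : Set (ℝ≥0 → ℝ≥0)) (X : Type*) [MetricSpace X] (n : ℕ) : Prop :=
  ∃ f ∈ S, ∃ s₀ : ℝ≥0, ∀ s : ℝ≥0, s₀ ≤ s →
    ∃ 𝒰 : Fin (n + 1) → Set (Set X),
      (⋃ i, ⋃₀ 𝒰 i) = univ ∧ ∀ i, SDisjoint s (𝒰 i) ∧ BoundedBy (f s) (𝒰 i)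

/-- The `S`-controlled asymptotic dimension, as an element of `ℕ∞`. -/
noncomputable def ASDim (S : Set (ℝ≥0 → ℝ≥0)) (X : Type*) [MetricSpace X] : ℕ∞ :=
  sInf {k : ℕ∞ | ∃ n : ℕ, k = n ∧ ASDimLE S X n}

/-- `S₁ ⪯ S₂` : `S₂` is finer than `S₁`. -/
def Preceq (S₁ S₂ : Set (ℝ≥0 → ℝ≥0)) : Prop :=
  ∀ f ∈ S₂, ∃ g ∈ S₁, ∀ᶠ x in atTop, f x ≤ g x

/-- The control semigroup generated by a set `K` of large-scale dim-control functions: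
the intersection of all control semigroups containing `K`. -/
def GenSemigroup (K : Set (ℝ≥0 → ℝ≥0)) : Set (ℝ≥0 → ℝ≥0) :=
  {g | ∀ S : Set (ℝ≥0 → ℝ≥0), IsControlSemigroup S → K ⊆ S → g ∈ S}

namespace ASDimAux

/-- The telescope scales. -/
noncomputable def EE (f : ℝ≥0 → ℝ≥0) (c : ℝ≥0) : ℕ → ℝ≥0
  | 0 => c
  | k+1 => EE f c k * (2 + (⌈f (EE f c k) / EE f c k⌉₊ : ℝ≥0))

/-- Number of steps in each chain. -/
noncomputable def mm (f : ℝ≥0 → ℝ≥0) (c : ℝ≥0) (k : ℕ) : ℕ :=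
  ⌈f (EE f c k) / EE f c k⌉₊

lemma EE_succ (f : ℝ≥0 → ℝ≥0) (c : ℝ≥0) (k : ℕ) :
    EE f c (k+1) = EE f c k * (2 + (mm f c k : ℝ≥0)) := rfl

/-- The point set of the space. -/
def P (f : ℝ≥0 → ℝ≥0) (c : ℝ≥0) : Set ℝ≥0 :=
  {x | ∃ a j : ℕ, 2 ≤ j ∧ j ≤ mm f c a + 2 ∧ x = EE f c a * j}

variable {f : ℝ≥0 → ℝ≥0} {c : ℝ≥0}

lemma one_le_EE (hc : 1 ≤ c) : ∀ k, 1 ≤ EE f c k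
  | 0 => hc
  | k+1 => le_trans (one_le_EE hc k)
      (le_mul_of_one_le_right zero_le (le_trans one_le_two le_self_add))

lemma EE_pos (hc : 1 ≤ c) (k : ℕ) : 0 < EE f c k :=
  lt_of_lt_of_le one_pos (one_le_EE hc k)

lemma two_mul_le (f : ℝ≥0 → ℝ≥0) (c : ℝ≥0) (k : ℕ) :
    2 * EE f c k ≤ EE f c (k+1) := by
  rw [EE_succ, mul_comm]
  exact mul_le_mul_right (le_self_add : (2:ℝ≥0) ≤ 2 + (mm f c k : ℝ≥0)) _

lemma EE_lt_succ (hc : 1 ≤ c) (k : ℕ) : EE f c k < EE f c (k+1) := by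
  refine lt_of_lt_of_le ?_ (two_mul_le f c k)
  calc EE f c k = 1 * EE f c k := (one_mul _).symm
    _ < 2 * EE f c k := mul_lt_mul_of_pos_right one_lt_two (EE_pos hc k)

lemma EE_strictMono (hc : 1 ≤ c) : StrictMono (EE f c) :=
  strictMono_nat_of_lt_succ (EE_lt_succ hc)

lemma c_le_EE (hc : 1 ≤ c) (k : ℕ) : c ≤ EE f c k :=
  (EE_strictMono hc).monotone (Nat.zero_le k)

lemma nat_le_EE (hc : 1 ≤ c) (k : ℕ) : (k : ℝ≥0) ≤ EE f c k := by
  induction k with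
  | zero => simp
  | succ k ih =>
      push_cast
      calc (k : ℝ≥0) + 1 ≤ EE f c k + EE f c k :=
            add_le_add ih (one_le_EE hc k)
        _ = 2 * EE f c k := (two_mul _).symm
        _ ≤ EE f c (k+1) := two_mul_le f c k

lemma f_le_mm (hc : 1 ≤ c) (k : ℕ) :
    f (EE f c k) ≤ (mm f c k : ℝ≥0) * EE f c k := by
  have hne : EE f c k ≠ 0 := (EE_pos hc k).ne'
  calc f (EE f c k) = f (EE f c k) / EE f c k * EE f c k :=
        (div_mul_cancel₀ _ hne).symm
    _ ≤ (mm f c k : ℝ≥0) * EE f c k :=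
        mul_le_mul_left (Nat.le_ceil _) _

lemma mm_mul_le (hc : 1 ≤ c) (k : ℕ) :
    (mm f c k : ℝ≥0) * EE f c k ≤ f (EE f c k) + EE f c k := by
  have hne : EE f c k ≠ 0 := (EE_pos hc k).ne'
  have h := (Nat.ceil_lt_add_one (zero_le : (0:ℝ≥0) ≤ f (EE f c k) / EE f c k)).le
  calc (mm f c k : ℝ≥0) * EE f c k
      ≤ (f (EE f c k) / EE f c k + 1) * EE f c k := mul_le_mul_left h _
    _ = f (EE f c k) / EE f c k * EE f c k + EE f c k := by ring
    _ = f (EE f c k) + EE f c k := by rw [div_mul_cancel₀ _ hne]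

lemma EE_succ_le (hc : 1 ≤ c) (k : ℕ) :
    EE f c (k+1) ≤ 3 * EE f c k + f (EE f c k) := by
  rw [EE_succ]
  have h := mm_mul_le (f := f) hc k
  calc EE f c k * (2 + (mm f c k : ℝ≥0))
      = 2 * EE f c k + (mm f c k : ℝ≥0) * EE f c k := by ring
    _ ≤ 2 * EE f c k + (f (EE f c k) + EE f c k) := add_le_add_right h _
    _ = 3 * EE f c k + f (EE f c k) := by ring

lemma point_le {a j : ℕ} (hjm : j ≤ mm f c a + 2) :
    EE f c a * j ≤ EE f c (a+1) := by
  rw [EE_succ]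
  refine mul_le_mul_right ?_ _
  have h : (j : ℝ≥0) ≤ ((mm f c a + 2 : ℕ) : ℝ≥0) := Nat.cast_le.mpr hjm
  push_cast at h
  calc (j : ℝ≥0) ≤ (mm f c a : ℝ≥0) + 2 := h
    _ = 2 + (mm f c a : ℝ≥0) := add_comm _ _

lemma point_ge {a j : ℕ} (h2 : 2 ≤ j) :
    2 * EE f c a ≤ EE f c a * j := by
  rw [mul_comm]
  refine mul_le_mul_right ?_ _
  exact_mod_cast Nat.cast_le.mpr h2

lemma idx_ge (hc : 1 ≤ c) {n a j : ℕ} (hjm : j ≤ mm f c a + 2)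
    (h : EE f c n < EE f c a * j) : n ≤ a := by
  by_contra hcon
  push_neg at hcon
  have h1 : EE f c a * j ≤ EE f c n :=
    (point_le hjm).trans ((EE_strictMono hc).monotone hcon)
  exact absurd h (not_lt.mpr h1)

lemma mem_ge (hc : 1 ≤ c) {n : ℕ} {x : ℝ≥0} (hx : x ∈ P f c)
    (hn : EE f c n < x) : 2 * EE f c n ≤ x := by
  obtain ⟨a, j, h2, hjm, rfl⟩ := hx
  have hna : n ≤ a := idx_ge hc hjm hn
  calc 2 * EE f c n ≤ 2 * EE f c a :=
        mul_le_mul_right ((EE_strictMono hc).monotone hna) _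
    _ ≤ EE f c a * j := point_ge h2

lemma sep_aux (hc : 1 ≤ c) {a i b j : ℕ}
    (h2i : 2 ≤ i) (hi : i ≤ mm f c a + 2) (h2j : 2 ≤ j) (hj : j ≤ mm f c b + 2)
    (hab : a ≤ b) (hne : EE f c a * i ≠ EE f c b * j) :
    ((EE f c a : ℝ≥0) : ℝ) ≤ |((EE f c a * i : ℝ≥0) : ℝ) - ((EE f c b * j : ℝ≥0) : ℝ)| := by
  rcases eq_or_lt_of_le hab with rfl | hab
  · -- same chain
    have hij : i ≠ j := by
      rintro rfl; exact hne rfl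
    have h2 : (1 : ℤ) ≤ |(i : ℤ) - j| :=
      Int.one_le_abs (sub_ne_zero.mpr (by exact_mod_cast hij))
    have h3 : (1 : ℝ) ≤ |(i : ℝ) - j| := by exact_mod_cast h2
    have hE : (0 : ℝ) ≤ (EE f c a : ℝ) := (EE f c a).coe_nonneg
    push_cast
    calc ((EE f c a : ℝ≥0) : ℝ) = (EE f c a : ℝ) * 1 := (mul_one _).symm
      _ ≤ (EE f c a : ℝ) * |(i : ℝ) - j| := by
          exact mul_le_mul_of_nonneg_left h3 hE
      _ = |(EE f c a : ℝ) * i - (EE f c a : ℝ) * j| := by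
          rw [← mul_sub, abs_mul, abs_of_nonneg hE]
  · -- different chains
    have hab1 : a + 1 ≤ b := hab
    have h1 : EE f c a * i ≤ EE f c b :=
      (point_le hi).trans ((EE_strictMono hc).monotone hab1)
    have h2 : 2 * EE f c b ≤ EE f c b * j := point_ge h2j
    have h3 : EE f c a ≤ EE f c b := (EE_strictMono hc).monotone hab.le
    have c1 : ((EE f c a * i : ℝ≥0) : ℝ) ≤ (EE f c b : ℝ) := NNReal.coe_le_coe.mpr h1
    have c2 : 2 * ((EE f c b : ℝ≥0) : ℝ) ≤ ((EE f c b * j : ℝ≥0) : ℝ) := by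
      exact_mod_cast NNReal.coe_le_coe.mpr h2
    have c3 : ((EE f c a : ℝ≥0) : ℝ) ≤ (EE f c b : ℝ) := NNReal.coe_le_coe.mpr h3
    have key : ((EE f c a : ℝ≥0) : ℝ) ≤
        ((EE f c b * j : ℝ≥0) : ℝ) - ((EE f c a * i : ℝ≥0) : ℝ) := by linarith
    refine key.trans ?_
    rw [abs_sub_comm]
    exact le_abs_self _

lemma sep (hc : 1 ≤ c) {n : ℕ} {x y : ℝ≥0} (hx : x ∈ P f c) (hy : y ∈ P f c)
    (hxn : EE f c n < x) (hyn : EE f c n < y) (hne : x ≠ y) :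
    ((EE f c n : ℝ≥0) : ℝ) ≤ |(x : ℝ) - (y : ℝ)| := by
  obtain ⟨a, i, h2i, hi, rfl⟩ := hx
  obtain ⟨b, j, h2j, hj, rfl⟩ := hy
  have hna : n ≤ a := idx_ge hc hi hxn
  have hnb : n ≤ b := idx_ge hc hj hyn
  rcases le_total a b with hab | hab
  · have h := sep_aux hc h2i hi h2j hj hab hne
    have hE : ((EE f c n : ℝ≥0) : ℝ) ≤ (EE f c a : ℝ) :=
      NNReal.coe_le_coe.mpr ((EE_strictMono hc).monotone hna)
    linarith
  · have h := sep_aux hc h2j hj h2i hi hab hne.symm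
    have hE : ((EE f c n : ℝ≥0) : ℝ) ≤ (EE f c b : ℝ) :=
      NNReal.coe_le_coe.mpr ((EE_strictMono hc).monotone hnb)
    rw [abs_sub_comm]
    linarith

/-- Upper bound: the generated semigroup gives asymptotic dimension ≤ 0. -/
lemma upper (hc : 1 ≤ c) (hfc : ∀ x, c ≤ x → x ≤ f x) (hmono : Monotone f)
    (S : Set (ℝ≥0 → ℝ≥0)) :
    ASDimLE (GenSemigroup (insert f S)) ↥(P f c) 0 := by
  refine ⟨fun x => 4 * f x, ?_, c, ?_⟩
  · -- membership in the generated semigroup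
    intro T hT hsub
    have hfT : f ∈ T := hsub (mem_insert f S)
    have hq : (fun x : ℝ≥0 => 4 * x) ∈ T := by
      refine hT.2.1 _ ⟨continuous_const.mul continuous_id,
        fun a b h => mul_le_mul_right h 4,
        Eventually.of_forall fun x => le_mul_of_one_le_left zero_le (by norm_num),
        tendsto_atTop_mono (fun x => le_mul_of_one_le_left zero_le (by norm_num))
          tendsto_id⟩ ⟨4, 0, Eventually.of_forall fun x => (add_zero _).symm⟩
    exact hT.2.2 _ hq _ hfT
  · intro s hs
    have hex : ∃ k, s < EE f c k := by
      obtain ⟨n, hn⟩ := exists_nat_gt s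
      exact ⟨n, hn.trans_le (nat_le_EE hc n)⟩
    set N := Nat.find hex with hNdef
    have hsN : s < EE f c N := Nat.find_spec hex
    have hN1 : 1 ≤ N := by
      rcases Nat.eq_zero_or_pos N with h | h
      · exfalso
        rw [h] at hsN
        exact absurd hsN (not_lt.mpr hs)
      · exact h
    have hprev : EE f c (N-1) ≤ s := not_lt.mp (Nat.find_min hex (by omega))
    have hEN : EE f c N ≤ 4 * f s := by
      have h1 : EE f c N ≤ 3 * EE f c (N-1) + f (EE f c (N-1)) := by
        have h := EE_succ_le (f := f) hc (N-1)
        rwa [show N - 1 + 1 = N by omega] at h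
      have h2 : f (EE f c (N-1)) ≤ f s := hmono hprev
      have h3 : s ≤ f s := hfc s hs
      calc EE f c N ≤ 3 * EE f c (N-1) + f (EE f c (N-1)) := h1
        _ ≤ 3 * s + f s := add_le_add (mul_le_mul_right hprev 3) h2
        _ ≤ 3 * f s + f s := add_le_add_left (mul_le_mul_right h3 3) _
        _ = 4 * f s := by ring
    set A : Set ↥(P f c) := {x | (x : ℝ≥0) ≤ EE f c N} with hA
    refine ⟨fun _ => insert A ((fun x : ↥(P f c) => ({x} : Set ↥(P f c))) ''
      {x | EE f c N < (x : ℝ≥0)}), ?_, ?_⟩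
    · apply eq_univ_of_forall
      intro x
      rcases le_or_gt (x : ℝ≥0) (EE f c N) with h | h
      · exact mem_iUnion.mpr ⟨0, A, mem_insert _ _, h⟩
      · exact mem_iUnion.mpr ⟨0, {x}, mem_insert_of_mem _ ⟨x, h, rfl⟩, rfl⟩
    · intro i
      constructor
      · -- disjointness
        intro U hU V hV hUV x hx y hy
        have hsNR : (s : ℝ) < ((EE f c N : ℝ≥0) : ℝ) := NNReal.coe_lt_coe.mpr hsN
        rcases hU with rfl | ⟨u, hu, rfl⟩ <;> rcases hV with rfl | ⟨v, hv, rfl⟩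
        · exact absurd rfl hUV
        · -- U = A, V = {v}
          have hy' : y = v := hy
          subst hy'
          have hxA : (x : ℝ≥0) ≤ EE f c N := hx
          have h2v : 2 * EE f c N ≤ (y : ℝ≥0) := mem_ge hc y.2 hv
          rw [Subtype.dist_eq, NNReal.dist_eq]
          have c1 : ((x : ℝ≥0) : ℝ) ≤ (EE f c N : ℝ) := NNReal.coe_le_coe.mpr hxA
          have c2 : 2 * ((EE f c N : ℝ≥0) : ℝ) ≤ ((y : ℝ≥0) : ℝ) := by
            exact_mod_cast NNReal.coe_le_coe.mpr h2v
          have habs : ((y : ℝ≥0) : ℝ) - ((x : ℝ≥0) : ℝ) ≤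
              |((x : ℝ≥0) : ℝ) - ((y : ℝ≥0) : ℝ)| := by
            rw [abs_sub_comm]; exact le_abs_self _
          linarith
        · -- U = {u}, V = A
          have hx' : x = u := hx
          subst hx'
          have hyA : (y : ℝ≥0) ≤ EE f c N := hy
          have h2u : 2 * EE f c N ≤ (x : ℝ≥0) := mem_ge hc x.2 hu
          rw [Subtype.dist_eq, NNReal.dist_eq]
          have c1 : ((y : ℝ≥0) : ℝ) ≤ (EE f c N : ℝ) := NNReal.coe_le_coe.mpr hyA
          have c2 : 2 * ((EE f c N : ℝ≥0) : ℝ) ≤ ((x : ℝ≥0) : ℝ) := by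
            exact_mod_cast NNReal.coe_le_coe.mpr h2u
          have habs : ((x : ℝ≥0) : ℝ) - ((y : ℝ≥0) : ℝ) ≤
              |((x : ℝ≥0) : ℝ) - ((y : ℝ≥0) : ℝ)| := le_abs_self _
          linarith
        · -- both singletons
          have hx' : x = u := hx
          have hy' : y = v := hy
          subst hx'; subst hy'
          have hne : (x : ℝ≥0) ≠ (y : ℝ≥0) := by
            intro h
            exact hUV (by rw [Subtype.coe_injective h])
          have h := sep hc x.2 y.2 hu hv hne
          rw [Subtype.dist_eq, NNReal.dist_eq]
          linarith
      · -- boundedness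
        intro U hU
        rcases hU with rfl | ⟨u, hu, rfl⟩
        · refine EMetric.diam_le fun x hx y hy => ?_
          rw [edist_le_coe, ← dist_le_coe, Subtype.dist_eq, NNReal.dist_eq]
          have hxA : (x : ℝ≥0) ≤ EE f c N := hx
          have hyA : (y : ℝ≥0) ≤ EE f c N := hy
          have hb : ((EE f c N : ℝ≥0) : ℝ) ≤ ((4 * f s : ℝ≥0) : ℝ) :=
            NNReal.coe_le_coe.mpr hEN
          have c1 : ((x : ℝ≥0) : ℝ) ≤ (EE f c N : ℝ) := NNReal.coe_le_coe.mpr hxA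
          have c2 : ((y : ℝ≥0) : ℝ) ≤ (EE f c N : ℝ) := NNReal.coe_le_coe.mpr hyA
          have hx0 : (0 : ℝ) ≤ ((x : ℝ≥0) : ℝ) := (x : ℝ≥0).coe_nonneg
          have hy0 : (0 : ℝ) ≤ ((y : ℝ≥0) : ℝ) := (y : ℝ≥0).coe_nonneg
          rw [abs_sub_le_iff]
          constructor <;> linarith
        · exact (EMetric.diam_subsingleton subsingleton_singleton).le.trans zero_le

/-- Lower bound: no function of `S` can control a dimension-0 decomposition. -/
lemma lower (hc : 1 ≤ c) (S : Set (ℝ≥0 → ℝ≥0))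
    (hbound : ∀ g ∈ S, ∀ᶠ x in atTop, g x < f x) :
    ¬ ASDimLE S ↥(P f c) 0 := by
  rintro ⟨g, hg, s₀, hcov⟩
  obtain ⟨x₁, hx₁⟩ := eventually_atTop.mp (hbound g hg)
  obtain ⟨n, hn⟩ := exists_nat_gt (max s₀ x₁)
  have hkn : max s₀ x₁ ≤ EE f c n := hn.le.trans (nat_le_EE hc n)
  obtain ⟨𝒰, hcover, hprop⟩ := hcov (EE f c n) ((le_max_left _ _).trans hkn)
  have hgf : g (EE f c n) < f (EE f c n) := hx₁ _ ((le_max_right _ _).trans hkn)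
  set m := mm f c n with hm
  let p : ℕ → ↥(P f c) := fun j =>
    ⟨EE f c n * ((min j m + 2 : ℕ) : ℝ≥0), ⟨n, min j m + 2, by omega, by omega, rfl⟩⟩
  have hpcoe : ∀ j, ((p j : ℝ≥0)) = EE f c n * ((min j m + 2 : ℕ) : ℝ≥0) := fun j => rfl
  have hmem : ∀ x : ↥(P f c), ∃ V ∈ 𝒰 0, x ∈ V := by
    intro x
    have hx : x ∈ ⋃ i, ⋃₀ 𝒰 i := hcover.symm ▸ mem_univ x
    rw [mem_iUnion] at hx
    obtain ⟨i, hx⟩ := hx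
    have : i = 0 := Fin.eq_zero i
    subst this
    exact mem_sUnion.mp hx
  obtain ⟨U₀, hU₀, hp0⟩ := hmem (p 0)
  have hall : ∀ j, j ≤ m → p j ∈ U₀ := by
    intro j
    induction j with
    | zero => intro _; exact hp0
    | succ j ih =>
      intro hj
      have hjm : j ≤ m := by omega
      obtain ⟨V, hV, hpV⟩ := hmem (p (j+1))
      by_contra hcon
      have hVU : U₀ ≠ V := fun h => hcon (h ▸ hpV)
      have hlt := (hprop 0).1 U₀ hU₀ V hV hVU (p j) (ih hjm) (p (j+1)) hpV
      have hd : dist (p j) (p (j+1)) = ((EE f c n : ℝ≥0) : ℝ) := by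
        rw [Subtype.dist_eq, NNReal.dist_eq, hpcoe, hpcoe,
          min_eq_left hjm, min_eq_left hj]
        push_cast
        rw [show ((EE f c n : ℝ≥0) : ℝ) * ((j : ℝ) + 2) -
            ((EE f c n : ℝ≥0) : ℝ) * ((j : ℝ) + 1 + 2) =
            -((EE f c n : ℝ≥0) : ℝ) by ring]
        rw [abs_neg, abs_of_nonneg (EE f c n).coe_nonneg]
      rw [hd] at hlt
      exact absurd hlt (lt_irrefl _)
  have h0 : p 0 ∈ U₀ := hp0
  have hmU : p m ∈ U₀ := hall m le_rfl
  have hed : edist (p 0) (p m) ≤ ((g (EE f c n) : ℝ≥0) : ℝ≥0∞) :=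
    le_trans (EMetric.edist_le_diam_of_mem h0 hmU) ((hprop 0).2 U₀ hU₀)
  rw [edist_le_coe, ← dist_le_coe] at hed
  have hdist : dist (p 0) (p m) = (m : ℝ) * ((EE f c n : ℝ≥0) : ℝ) := by
    rw [Subtype.dist_eq, NNReal.dist_eq, hpcoe, hpcoe, Nat.min_self,
      show min 0 m = 0 from Nat.zero_min m]
    push_cast
    rw [show ((EE f c n : ℝ≥0) : ℝ) * 2 -
        ((EE f c n : ℝ≥0) : ℝ) * ((m : ℝ) + 2) =
        -((m : ℝ) * ((EE f c n : ℝ≥0) : ℝ)) by ring]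
    rw [abs_neg, abs_of_nonneg (by positivity)]
  have hfm : ((f (EE f c n) : ℝ≥0) : ℝ) ≤ (m : ℝ) * ((EE f c n : ℝ≥0) : ℝ) := by
    have := f_le_mm (f := f) hc n
    rw [← hm] at this
    exact_mod_cast NNReal.coe_le_coe.mpr this
  have hlt' : ((g (EE f c n) : ℝ≥0) : ℝ) < ((f (EE f c n) : ℝ≥0) : ℝ) :=
    NNReal.coe_lt_coe.mpr hgf
  rw [hdist] at hed
  linarith

end ASDimAux

/-- If `S` is mono-bounded at infinity with bound function `f`, then there is a
metric space `X` with `asdim_{L({f} ∪ S)} X = 0` but `asdim_S X > 0`. -/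
theorem exists_space_distinguishing_monobounded (S : Set (ℝ≥0 → ℝ≥0))
    (hS : IsControlSemigroup S) (f : ℝ≥0 → ℝ≥0) (hf : IsLSControl f)
    (hbound : ∀ g ∈ S, ∀ᶠ x in atTop, g x < f x) :
    ∃ (X : Type) (mX : MetricSpace X),
      @ASDim (GenSemigroup (insert f S)) X mX = 0 ∧ 0 < @ASDim S X mX := by
  obtain ⟨x₀, hx₀⟩ := eventually_atTop.mp hf.2.2.1
  set c := x₀ + 1 with hcdef
  have hc : 1 ≤ c := le_add_self
  have hfc : ∀ x, c ≤ x → x ≤ f x := fun x hx => hx₀ x (le_self_add.trans hx)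
  refine ⟨↥(ASDimAux.P f c), inferInstance, ?_, ?_⟩
  · have hup := ASDimAux.upper hc hfc hf.2.1 S
    refine le_antisymm ?_ zero_le
    exact sInf_le ⟨0, by norm_num, hup⟩
  · have hlow := ASDimAux.lower hc S hbound
    have h1 : (1 : ℕ∞) ≤ ASDim S ↥(ASDimAux.P f c) := by
      apply le_sInf
      rintro b ⟨n, rfl, hn⟩
      rcases Nat.eq_zero_or_pos n with h | h
      · subst h; exact absurd hn hlow
      · exact_mod_cast h
    exact lt_of_lt_of_le zero_lt_one h1
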